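/- arXiv:2506.21128 — 2 statements merged into one kernel-verified Lean document; each statement's English description precedes it below -/
import Mathlib

section
/- For a metric space M the following are equivalent: (i) M is tractable and bounded; (ii) M is tractable and compact; (iii) M is positive definite, compact, and has finite magnitude mg(M) < ∞. -/
open Metric TopologicalSpace Filter Topology Bornology
open scoped ENNReal NNReal

/-- The similarity matrix of a finite subset of a metric space. -/
noncomputable def simMatrix {X : Type*} [MetricSpace X] (s : Finset X) : Matrix s s ℝ :=
  fun i j => Real.exp (-dist (i : X) (j : X))

/-- A metric space is positive definite when every finite subspace has a positive
definite similarity matrix. -/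
def IsPosDefSpace (X : Type*) [MetricSpace X] : Prop :=
  ∀ s : Finset X, (simMatrix s).PosDef

/-- The magnitude of a finite subset of a metric space: the sum of the entries of the
inverse of its similarity matrix. -/
noncomputable def finMag {X : Type*} [MetricSpace X] (s : Finset X) : ℝ :=
  letI : DecidableEq X := Classical.decEq X
  ∑ i, ∑ j, (simMatrix s)⁻¹ i j

/-- The magnitude of a (compact) subset of a metric space, valued in `[0, ∞]`:
the supremum of the magnitudes of its finite subsets. -/
noncomputable def cMagE {X : Type*} [MetricSpace X] (K : Set X) : ℝ≥0∞ :=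
  ⨆ (s : Finset X) (_ : (s : Set X) ⊆ K), ENNReal.ofReal (finMag s)

/-- The real-valued magnitude of a (compact) subset of a metric space. -/
noncomputable def cMag {X : Type*} [MetricSpace X] (K : Set X) : ℝ :=
  (cMagE K).toReal

/-- A metric space is tractable when it is positive definite and all of its closed balls
are compact and of finite magnitude. -/
def Tractable (X : Type*) [MetricSpace X] : Prop :=
  IsPosDefSpace X ∧ (∀ (x : X) (r : ℝ), IsCompact (closedBall x r)) ∧
    ∀ (x : X) (r : ℝ), cMagE (closedBall x r) < ⊤

lemma cMagE_mono {X : Type*} [MetricSpace X] {K K' : Set X} (h : K ⊆ K') :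
    cMagE K ≤ cMagE K' := by
  refine iSup₂_le fun s hs => ?_
  exact le_iSup₂_of_le s (hs.trans h) le_rfl

/-- For a metric space `M`, the following are equivalent: (i) `M` is
tractable and bounded; (ii) `M` is tractable and compact; (iii) `M` is positive definite,
compact and of finite magnitude. -/
theorem stmt_5 (M : Type*) [MetricSpace M] :
    ((Tractable M ∧ IsBounded (Set.univ : Set M)) ↔ (Tractable M ∧ CompactSpace M)) ∧
    ((Tractable M ∧ CompactSpace M) ↔
      (IsPosDefSpace M ∧ CompactSpace M ∧ cMagE (Set.univ : Set M) < ⊤)) := by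
  constructor
  · constructor
    · rintro ⟨hT, hB⟩
      refine ⟨hT, ?_⟩
      rcases isEmpty_or_nonempty M with h | ⟨⟨x⟩⟩
      · exact Finite.compactSpace
      · obtain ⟨r, hr⟩ := hB.subset_closedBall x
        exact isCompact_univ_iff.mp ((hT.2.1 x r).of_isClosed_subset isClosed_univ hr)
    · rintro ⟨hT, hC⟩
      exact ⟨hT, isCompact_univ.isBounded⟩
  · constructor
    · rintro ⟨hT, hC⟩
      refine ⟨hT.1, hC, ?_⟩
      rcases isEmpty_or_nonempty M with h | ⟨⟨x⟩⟩
      · refine lt_of_le_of_lt (iSup₂_le fun s _ => ?_)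
          (ENNReal.ofReal_lt_top : ENNReal.ofReal (finMag (∅ : Finset M)) < ⊤)
        rw [Finset.eq_empty_of_isEmpty s]
      · obtain ⟨r, hr⟩ := isCompact_univ.isBounded.subset_closedBall x
        calc cMagE (Set.univ : Set M) ≤ cMagE (closedBall x r) :=
              cMagE_mono hr
          _ < ⊤ := hT.2.2 x r
    · rintro ⟨hP, hC, hM⟩
      refine ⟨⟨hP, fun x r => ?_, fun x r => ?_⟩, hC⟩
      · exact isCompact_univ.of_isClosed_subset isClosed_closedBall (Set.subset_univ _)
      · exact lt_of_le_of_lt (cMagE_mono (Set.subset_univ _)) hM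
end

section
/- The magnitude map on nonempty compact subsets of ℕ (viewed as a metric subspace of ℝ), equipped with the Hausdorff metric, is not Lipschitz: for every C > 0 there exist nonempty finite sets A, B ⊆ ℕ (namely A = {2k : 0 ≤ k ≤ N} and B = {0, 1, …, 2N} for suitable N) with d_H(A, B) = 1 and mg(B) − mg(A) = N·(2 tanh(1/2) − tanh(1)) > C. -/
open Metric TopologicalSpace Filter Topology Bornology
open scoped ENNReal NNReal

lemma sinh_nonneg' {x : ℝ} (hx : 0 ≤ x) : 0 ≤ Real.sinh x := by positivity

lemma tanh_half_eq (x : ℝ) : Real.tanh (x/2) = (1 - Real.exp (-x)) / (1 + Real.exp (-x)) := by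
  rw [Real.tanh_eq_sinh_div_cosh, Real.sinh_eq, Real.cosh_eq]
  have h1 : Real.exp (-x) = Real.exp (-(x/2)) * Real.exp (-(x/2)) := by
    rw [← Real.exp_add]; ring_nf
  have h2 : Real.exp (-(x/2)) = (Real.exp (x/2))⁻¹ := Real.exp_neg _
  have hu : (0:ℝ) < Real.exp (x/2) := Real.exp_pos _
  have hd : (0:ℝ) < 1 + Real.exp (-x) := by positivity
  rw [h1, h2]
  field_simp

lemma tanh_nonneg' {x : ℝ} (hx : 0 ≤ x) : 0 ≤ Real.tanh x := by
  rw [Real.tanh_eq_sinh_div_cosh]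
  exact div_nonneg (sinh_nonneg' hx) (Real.cosh_pos x).le

lemma tanh_add_le {a b : ℝ} (ha : 0 ≤ a) (hb : 0 ≤ b) :
    Real.tanh (a + b) ≤ Real.tanh a + Real.tanh b := by
  rw [Real.tanh_eq_sinh_div_cosh, Real.tanh_eq_sinh_div_cosh, Real.tanh_eq_sinh_div_cosh,
    Real.sinh_add, Real.cosh_add]
  have hca := Real.cosh_pos a
  have hcb := Real.cosh_pos b
  have hsa := sinh_nonneg' ha
  have hsb := sinh_nonneg' hb
  rw [div_add_div _ _ hca.ne' hcb.ne', div_le_div_iff₀ (by positivity) (by positivity)]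
  nlinarith [mul_nonneg (mul_nonneg (add_nonneg (mul_nonneg hsa hcb.le) (mul_nonneg hca.le hsb)) hsa) hsb]

lemma tanh_nat_mul (k : ℕ) {x : ℝ} (hx : 0 ≤ x) : Real.tanh (k * x) ≤ k * Real.tanh x := by
  induction k with
  | zero => simp [Real.tanh_zero]
  | succ k ih =>
    have h : ((k:ℝ)+1) * x = k * x + x := by ring
    push_cast
    rw [h]
    have := tanh_add_le (by positivity : (0:ℝ) ≤ (k:ℝ)*x) hx
    nlinarith


noncomputable def expM {n : ℕ} (a : Fin n → ℝ) : Matrix (Fin n) (Fin n) ℝ :=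
  Matrix.of fun i j => Real.exp (-|a i - a j|)

lemma expM_key {n : ℕ} (a : Fin (n+1) → ℝ) (ha : StrictMono a) :
    ∃ T : Matrix (Fin (n+1)) (Fin (n+1)) ℝ,
      expM a * T = 1 ∧
      ∑ i, ∑ j, T i j = 1 + ∑ i : Fin n, Real.tanh ((a i.succ - a i.castSucc)/2) := by
  induction n with
  | zero =>
    refine ⟨1, by rw [Matrix.mul_one]; ext i j; fin_cases i; fin_cases j; simp [expM], ?_⟩
    simp [Matrix.one_apply]
  | succ n ih =>
    set a' : Fin (n+1) → ℝ := a ∘ Fin.castSucc with ha'def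
    have ha's : StrictMono a' := fun i j h => ha (by simpa [Fin.castSucc_lt_castSucc_iff] using h)
    obtain ⟨T', hT', hS'⟩ := ih a' ha's
    have hT'l : T' * expM a' = 1 := mul_eq_one_comm.mp hT'
    set L : Fin (n+1) := Fin.last n with hLdef
    set d : ℝ := a (Fin.last (n+1)) - a (Fin.castSucc (Fin.last n)) with hd
    have hd0 : 0 < d := sub_pos.mpr (ha (Fin.castSucc_lt_last _))
    set q : ℝ := Real.exp (-d) with hqdef
    have hq0 : 0 < q := Real.exp_pos _
    have hq1 : q < 1 := by
      rw [hqdef]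
      exact Real.exp_lt_one_iff.mpr (by linarith)
    have hden : 0 < 1 - q^2 := by nlinarith
    set α : ℝ := q^2/(1-q^2) with hαdef
    set β : ℝ := q/(1-q^2) with hβdef
    set γ : ℝ := 1/(1-q^2) with hγdef
    have hαβ : α = q * β := by rw [hαdef, hβdef]; ring
    have hβγ : β = q * γ := by rw [hβdef, hγdef]; ring
    have hqαβ : q + q * α - β = 0 := by
      rw [hαdef, hβdef]; field_simp; ring
    have hqβγ : -(q * β) + γ = 1 := by
      rw [hβdef, hγdef]; field_simp; ring
    set e : Fin (n+1) → ℝ := fun i => if i = L then 1 else 0 with hedef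
    set A : Matrix (Fin (n+1)) (Fin (n+1)) ℝ := expM a' with hAdef
    have hAL : ∀ i, A i L = Real.exp (a' i - a' L) := by
      intro i
      have h1 : a' i ≤ a' L := ha's.monotone (Fin.le_last i)
      have h2 : |a' i - a' L| = -(a' i - a' L) := abs_of_nonpos (by linarith)
      simp [hAdef, expM, h2]
    have hALrow : ∀ k, Real.exp (a' k - a' L) = A L k := by
      intro k
      have h1 : a' k ≤ a' L := ha's.monotone (Fin.le_last k)
      have h2 : |a' L - a' k| = a' L - a' k := abs_of_nonneg (by linarith)
      simp only [hAdef, expM, Matrix.of_apply, h2]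
      congr 1; ring
    have hALL : A L L = 1 := by rw [hAL]; simp
    set Bv : Matrix (Fin (n+1)) (Fin 1) ℝ := Matrix.of fun i _ => q * Real.exp (a' i - a' L) with hBv
    set Cv : Matrix (Fin 1) (Fin (n+1)) ℝ := Matrix.of fun _ j => q * Real.exp (a' j - a' L) with hCv
    set Dv : Matrix (Fin 1) (Fin 1) ℝ := Matrix.of fun _ _ => (1:ℝ) with hDv
    set M1 : Matrix (Fin (n+1)) (Fin (n+1)) ℝ := Matrix.of fun i j => α * e i * e j with hM1
    set M2 : Matrix (Fin (n+1)) (Fin 1) ℝ := Matrix.of fun i _ => -β * e i with hM2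
    set M3 : Matrix (Fin 1) (Fin (n+1)) ℝ := Matrix.of fun _ j => -β * e j with hM3
    set M4 : Matrix (Fin 1) (Fin 1) ℝ := Matrix.of fun _ _ => γ with hM4
    have hAM1 : A * M1 = Matrix.of fun i j => α * Real.exp (a' i - a' L) * e j := by
      ext i j
      simp only [Matrix.mul_apply, hM1, Matrix.of_apply, hedef]
      rw [Finset.sum_eq_single L]
      · simp [hAL i]; ring
      · intro b _ hb; simp [hb]
      · intro h; exact absurd (Finset.mem_univ L) h
    have hAM2 : A * M2 = Matrix.of fun i _ => -β * Real.exp (a' i - a' L) := by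
      ext i j
      simp only [Matrix.mul_apply, hM2, Matrix.of_apply, hedef]
      rw [Finset.sum_eq_single L]
      · simp [hAL i]; ring
      · intro b _ hb; simp [hb]
      · intro h; exact absurd (Finset.mem_univ L) h
    have hCvT' : Cv * T' = Matrix.of fun _ j => q * (if L = j then 1 else 0) := by
      ext i j
      simp only [Matrix.mul_apply, hCv, Matrix.of_apply, hALrow, mul_assoc]
      rw [← Finset.mul_sum]
      congr 1
      rw [show ∑ k, A L k * T' k j = (A * T') L j from (Matrix.mul_apply).symm, hT',
        Matrix.one_apply]
    have hCvM1 : Cv * M1 = Matrix.of fun _ j => q * α * e j := by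
      ext i j
      simp only [Matrix.mul_apply, hCv, hM1, Matrix.of_apply, hedef]
      rw [Finset.sum_eq_single L]
      · simp
      · intro b _ hb; simp [hb]
      · intro h; exact absurd (Finset.mem_univ L) h
    have hCvM2 : Cv * M2 = Matrix.of fun _ _ => -(q * β) := by
      ext i j
      simp only [Matrix.mul_apply, hCv, hM2, Matrix.of_apply, hedef]
      rw [Finset.sum_eq_single L]
      · simp
      · intro b _ hb; simp [hb]
      · intro h; exact absurd (Finset.mem_univ L) h
    have key : Matrix.fromBlocks A Bv Cv Dv * Matrix.fromBlocks (T' + M1) M2 M3 M4 = 1 := by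
      have hB11 : A * (T' + M1) + Bv * M3 = 1 := by
        rw [Matrix.mul_add, hT', hAM1]
        have : Bv * M3 + Matrix.of (fun i j => α * Real.exp (a' i - a' L) * e j) = 0 := by
          ext i j
          simp only [Matrix.add_apply, Matrix.mul_apply, Fin.sum_univ_one, hBv, hM3,
            Matrix.of_apply, Matrix.zero_apply]
          rw [hαβ]; ring
        rw [add_assoc, add_comm (Matrix.of _), this, add_zero]
      have hB12 : A * M2 + Bv * M4 = 0 := by
        rw [hAM2]
        ext i j
        simp only [Matrix.add_apply, Matrix.mul_apply, Fin.sum_univ_one, hBv, hM2, hM4,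
          Matrix.of_apply, Matrix.zero_apply, hedef]
        rw [hβγ]
        rcases eq_or_ne i L with h | h <;> simp [h] <;> ring
      have hB21 : Cv * (T' + M1) + Dv * M3 = 0 := by
        rw [Matrix.mul_add, hCvT', hCvM1]
        ext i j
        simp only [Matrix.add_apply, Matrix.mul_apply, Fin.sum_univ_one, hDv, hM3,
          Matrix.of_apply, Matrix.zero_apply, hedef]
        rcases eq_or_ne j L with h | h
        · subst h; simp only [if_pos rfl, if_true]
          linarith [hqαβ]
        · simp [h, Ne.symm h]
      have hB22 : Cv * M2 + Dv * M4 = 1 := by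
        rw [hCvM2]
        ext i j
        simp only [Matrix.add_apply, Matrix.mul_apply, Fin.sum_univ_one, hDv, hM4,
          Matrix.of_apply, Matrix.one_apply, hedef]
        rw [show i = j from Subsingleton.elim i j, if_pos rfl]
        linarith [hqβγ]
      rw [Matrix.fromBlocks_multiply, hB11, hB12, hB21, hB22, Matrix.fromBlocks_one]
    -- transport along the equivalence
    set ee : (Fin (n+1) ⊕ Fin 1) ≃ Fin (n+2) := finSumFinEquiv with heedef
    have heeL : ∀ i : Fin (n+1), (ee (Sum.inl i) : Fin (n+2)) = Fin.castSucc i := by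
      intro i; rfl
    have heeR : ∀ j : Fin 1, (ee (Sum.inr j) : Fin (n+2)) = Fin.last (n+1) := by
      intro j
      have : j = 0 := Subsingleton.elim _ _
      subst this
      ext
      simp [heedef]
    have hsub : (expM a).submatrix ee ee = Matrix.fromBlocks A Bv Cv Dv := by
      ext i j
      rcases i with i | i <;> rcases j with j | j <;>
        simp only [Matrix.submatrix_apply, heeL, heeR, Matrix.fromBlocks_apply₁₁,
          Matrix.fromBlocks_apply₁₂, Matrix.fromBlocks_apply₂₁, Matrix.fromBlocks_apply₂₂]
      · rfl
      · -- i : Fin (n+1), j : Fin 1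
        have h1 : a' i ≤ a (Fin.last (n+1)) := by
          have := ha.monotone (Fin.le_last (Fin.castSucc i))
          simpa [ha'def] using this
        simp only [expM, Matrix.of_apply, hBv, hqdef]
        rw [abs_of_nonpos (by simp only [ha'def, Function.comp] at h1 ⊢; linarith), ← Real.exp_add]
        congr 1
        simp only [ha'def, Function.comp, hd, hLdef]
        ring
      · have h1 : a' j ≤ a (Fin.last (n+1)) := by
          have := ha.monotone (Fin.le_last (Fin.castSucc j))
          simpa [ha'def] using this
        simp only [expM, Matrix.of_apply, hCv, hqdef]
        rw [abs_of_nonneg (by simp only [ha'def, Function.comp] at h1 ⊢; linarith), ← Real.exp_add]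
        congr 1
        simp only [ha'def, Function.comp, hd, hLdef]
        ring
      · simp [expM, hDv]
    set F : Matrix (Fin (n+1) ⊕ Fin 1) (Fin (n+1) ⊕ Fin 1) ℝ :=
      Matrix.fromBlocks (T' + M1) M2 M3 M4 with hFdef
    refine ⟨F.submatrix ee.symm ee.symm, ?_, ?_⟩
    · have h1 : (expM a).submatrix ee ee * (F.submatrix ee.symm ee.symm).submatrix ee ee
          = ((expM a) * F.submatrix ee.symm ee.symm).submatrix ee ee :=
        Matrix.submatrix_mul_equiv _ _ _ ee _
      have h2 : (F.submatrix ee.symm ee.symm).submatrix ee ee = F := by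
        simp [Matrix.submatrix_submatrix]
      rw [h2, hsub, key] at h1
      have h3 := congrArg (fun M => M.submatrix ee.symm ee.symm) h1
      rw [Matrix.submatrix_submatrix] at h3
      simpa [Matrix.submatrix_one_equiv] using h3.symm
    · -- the sum
      have hsum_e : ∀ c : ℝ, ∑ i, c * e i = c := by
        intro c
        rw [Finset.sum_eq_single L]
        · simp [hedef]
        · intro b _ hb; simp [hedef, hb]
        · intro h; exact absurd (Finset.mem_univ L) h
      have hsum1 : ∑ i, ∑ j, F.submatrix ee.symm ee.symm i j = ∑ p, ∑ r, F p r := by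
        simp only [Matrix.submatrix_apply]
        exact Fintype.sum_equiv ee.symm _ _
          (fun i => Fintype.sum_equiv ee.symm _ _ (fun j => rfl))
      rw [hsum1]
      have hrow1 : ∀ i : Fin (n+1), ∑ r, F (Sum.inl i) r
          = (∑ j, T' i j) + α * e i + (-β * e i) := by
        intro i
        rw [Fintype.sum_sum_type, Fin.sum_univ_one]
        simp only [hFdef, Matrix.fromBlocks_apply₁₁, Matrix.fromBlocks_apply₁₂,
          Matrix.add_apply, hM1, hM2, Matrix.of_apply]
        rw [Finset.sum_add_distrib]
        congr 1
        congr 1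
        have := hsum_e (α * e i)
        simp only [mul_assoc] at this ⊢
        rw [← this]
      have hrow2 : ∑ r, F (Sum.inr (0 : Fin 1)) r = -β + γ := by
        rw [Fintype.sum_sum_type, Fin.sum_univ_one]
        simp only [hFdef, Matrix.fromBlocks_apply₂₁, Matrix.fromBlocks_apply₂₂,
          hM3, hM4, Matrix.of_apply]
        rw [hsum_e (-β)]
      have hsplit : ∑ p, ∑ r, F p r = (∑ i, ∑ j, T' i j) + (α - 2*β + γ) := by
        rw [Fintype.sum_sum_type, Fin.sum_univ_one, hrow2]
        rw [Finset.sum_congr rfl fun i _ => hrow1 i]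
        rw [Finset.sum_add_distrib, Finset.sum_add_distrib, hsum_e α, hsum_e (-β)]
        ring
      have htanh : α - 2*β + γ = Real.tanh (d/2) := by
        rw [tanh_half_eq d, ← hqdef, hαdef, hβdef, hγdef]
        have h1 : (0:ℝ) < 1 + q := by linarith
        field_simp
        ring
      rw [hsplit, hS', htanh]
      rw [Fin.sum_univ_castSucc
        (f := fun i : Fin (n+1) => Real.tanh ((a i.succ - a i.castSucc)/2))]
      have hlast : Real.tanh ((a (Fin.last n).succ - a (Fin.last n).castSucc)/2)
          = Real.tanh (d/2) := by
        rw [hd, Fin.succ_last]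
      have hmid : ∀ i : Fin n,
          Real.tanh ((a (Fin.castSucc i).succ - a (Fin.castSucc i).castSucc)/2)
          = Real.tanh ((a' i.succ - a' i.castSucc)/2) := by
        intro i
        simp only [ha'def, Function.comp_apply, Fin.succ_castSucc]
      rw [hlast, Finset.sum_congr rfl fun i _ => hmid i]
      ring


lemma finMag_eq {n : ℕ} (s : Finset ℕ) (f : Fin (n+1) → ℕ) (hmono : StrictMono f)
    (hmem : ∀ i, f i ∈ s) (hcard : s.card = n+1) :
    finMag s = 1 + ∑ i : Fin n, Real.tanh (((f i.succ : ℝ) - (f i.castSucc : ℝ))/2) := by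
  classical
  set a : Fin (n+1) → ℝ := fun i => (f i : ℝ) with hadef
  have ha : StrictMono a := fun i j h => by
    exact_mod_cast Nat.cast_lt.mpr (hmono h)
  obtain ⟨T, hT, hsum⟩ := expM_key a ha
  set g0 : Fin (n+1) → {x // x ∈ s} := fun i => ⟨f i, hmem i⟩ with hg0
  have hbij : Function.Bijective g0 := by
    rw [Fintype.bijective_iff_injective_and_card]
    constructor
    · intro i j h
      exact hmono.injective (congrArg Subtype.val h)
    · simp [Fintype.card_coe, hcard]
  set g : Fin (n+1) ≃ {x // x ∈ s} := Equiv.ofBijective g0 hbij with hg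
  have hgval : ∀ i, ((g i : ℕ) : ℝ) = a i := fun i => rfl
  have hgsymm : ∀ x : {x // x ∈ s}, a (g.symm x) = ((x : ℕ) : ℝ) := by
    intro x
    rw [← hgval (g.symm x), g.apply_symm_apply]
  have hsm : simMatrix s = (expM a).submatrix g.symm g.symm := by
    ext x y
    simp only [simMatrix, expM, Matrix.submatrix_apply, Matrix.of_apply, hgsymm]
    rfl
  have hinv : simMatrix s * T.submatrix g.symm g.symm = 1 := by
    rw [hsm, Matrix.submatrix_mul_equiv (expM a) T _ g.symm _, hT,
      Matrix.submatrix_one_equiv]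
  have hiseq : (simMatrix s)⁻¹ = T.submatrix g.symm g.symm := Matrix.inv_eq_right_inv hinv
  have : finMag s = ∑ i, ∑ j, (simMatrix s)⁻¹ i j := by
    unfold finMag
    rw [Subsingleton.elim (Classical.decEq ℕ) instDecidableEqNat]
  rw [this, hiseq]
  have hsum2 : ∑ x, ∑ y, T.submatrix g.symm g.symm x y = ∑ i, ∑ j, T i j := by
    simp only [Matrix.submatrix_apply]
    exact Fintype.sum_equiv g.symm _ _ (fun x => Fintype.sum_equiv g.symm _ _ (fun y => rfl))
  rw [hsum2, hsum]

lemma fin_telescope {m : ℕ} (u : Fin (m+1) → ℝ) :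
    ∑ i : Fin m, (u i.succ - u i.castSucc) = u (Fin.last m) - u 0 := by
  set v : ℕ → ℝ := fun k => if h : k ≤ m then u ⟨k, Nat.lt_succ_of_le h⟩ else 0 with hv
  have h1 : ∀ i : Fin m, u i.succ - u i.castSucc = v (↑i + 1) - v ↑i := by
    intro i
    have hi1 : (i:ℕ) + 1 ≤ m := i.2
    have hi : (i:ℕ) ≤ m := le_of_lt i.2
    simp only [hv, dif_pos hi1, dif_pos hi]
    rfl
  calc ∑ i : Fin m, (u i.succ - u i.castSucc)
      = ∑ i : Fin m, (v (↑i+1) - v ↑i) := Finset.sum_congr rfl fun i _ => h1 i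
    _ = ∑ i ∈ Finset.range m, (v (i+1) - v i) :=
        Fin.sum_univ_eq_sum_range (fun k => v (k+1) - v k) m
    _ = v m - v 0 := Finset.sum_range_sub v m
    _ = u (Fin.last m) - u 0 := by
        simp only [hv, dif_pos (le_refl m), dif_pos (Nat.zero_le m)]
        rfl


lemma finMag_Iic (M : ℕ) : finMag (Finset.Iic M) = 1 + M * Real.tanh (1/2) := by
  have h := finMag_eq (Finset.Iic M) (fun i : Fin (M+1) => (i : ℕ))
    (fun i j hij => hij) (fun i => Finset.mem_Iic.mpr (Nat.lt_succ_iff.mp i.2))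
    (Nat.card_Iic M)
  rw [h]
  congr 1
  rw [Finset.sum_congr rfl (fun (i : Fin M) _ => show _ = Real.tanh (1/2) by
    congr 1
    show (((i.succ : ℕ) : ℝ) - ((i.castSucc : ℕ) : ℝ))/2 = 1/2
    rw [Fin.val_succ, Fin.coe_castSucc]
    push_cast
    ring)]
  simp

lemma finMag_evens (N : ℕ) :
    finMag ((Finset.Iic N).image (fun k => 2*k)) = 1 + N * Real.tanh 1 := by
  have hcard : ((Finset.Iic N).image (fun k => 2*k)).card = N + 1 := by
    rw [Finset.card_image_of_injective _ (fun a b h => by omega), Nat.card_Iic]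
  have h := finMag_eq ((Finset.Iic N).image (fun k => 2*k)) (fun i : Fin (N+1) => 2*(i : ℕ))
    (fun i j hij => by have h2 := (Fin.lt_def).mp hij; simp only; omega)
    (fun i => Finset.mem_image.mpr ⟨i, Finset.mem_Iic.mpr (Nat.lt_succ_iff.mp i.2), rfl⟩)
    hcard
  rw [h]
  congr 1
  rw [Finset.sum_congr rfl (fun (i : Fin N) _ => show _ = Real.tanh 1 by
    congr 1
    show (((2*(i.succ : ℕ) : ℕ) : ℝ) - ((2*(i.castSucc : ℕ) : ℕ) : ℝ))/2 = 1
    rw [Fin.val_succ, Fin.coe_castSucc]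
    push_cast
    ring)]
  simp

lemma finMag_empty : finMag (∅ : Finset ℕ) = 0 := by
  unfold finMag
  simp

lemma finMag_le_Iic {N : ℕ} (s : Finset ℕ) (hs : s ⊆ Finset.Iic (2*N)) :
    finMag s ≤ 1 + (2*N) * Real.tanh (1/2) := by
  have ht0 : 0 ≤ Real.tanh (1/2) := tanh_nonneg' (by norm_num)
  rcases Finset.eq_empty_or_nonempty s with rfl | hne
  · rw [finMag_empty]
    have : (0:ℝ) ≤ (2*N:ℕ) * Real.tanh (1/2) := by positivity
    push_cast at this
    linarith
  · obtain ⟨m, hm⟩ : ∃ m, s.card = m + 1 :=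
      ⟨s.card - 1, (Nat.succ_pred_eq_of_pos (Finset.card_pos.mpr hne)).symm⟩
    set f := s.orderEmbOfFin hm with hf
    have h := finMag_eq s f f.strictMono (fun i => Finset.orderEmbOfFin_mem s hm i) hm
    rw [h]
    have hgap : ∀ i : Fin m, Real.tanh (((f i.succ : ℝ) - (f i.castSucc : ℝ))/2)
        ≤ ((f i.succ : ℝ) - (f i.castSucc : ℝ)) * Real.tanh (1/2) := by
      intro i
      have hlt : (f i.castSucc : ℕ) < f i.succ := f.strictMono (Fin.castSucc_lt_succ (i := i))
      have hcast : ((f i.succ : ℝ) - (f i.castSucc : ℝ))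
          = ((f i.succ - f i.castSucc : ℕ) : ℝ) := by
        rw [Nat.cast_sub hlt.le]
      rw [hcast]
      have harg : ((f i.succ - f i.castSucc : ℕ) : ℝ)/2
          = (f i.succ - f i.castSucc : ℕ) * (1/2 : ℝ) := by ring
      rw [harg]
      exact tanh_nat_mul _ (by norm_num)
    calc 1 + ∑ i : Fin m, Real.tanh (((f i.succ : ℝ) - (f i.castSucc : ℝ))/2)
        ≤ 1 + ∑ i : Fin m, ((f i.succ : ℝ) - (f i.castSucc : ℝ)) * Real.tanh (1/2) := by
          have := Finset.sum_le_sum (fun i (_ : i ∈ Finset.univ) => hgap i)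
          linarith
      _ = 1 + ((f (Fin.last m) : ℝ) - (f 0 : ℝ)) * Real.tanh (1/2) := by
          rw [← Finset.sum_mul, fin_telescope (fun i => (f i : ℝ))]
      _ ≤ 1 + (2*N) * Real.tanh (1/2) := by
          have h1 : (f (Fin.last m) : ℕ) ≤ 2*N :=
            Finset.mem_Iic.mp (hs (Finset.orderEmbOfFin_mem s hm _))
          have h2 : ((f (Fin.last m)) : ℝ) ≤ (2*N : ℕ) := by exact_mod_cast h1
          have h3 : (0:ℝ) ≤ (f 0 : ℝ) := Nat.cast_nonneg _
          have h4 : ((f (Fin.last m) : ℝ) - (f 0 : ℝ)) ≤ (2*N:ℕ) := by linarith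
          have := mul_le_mul_of_nonneg_right h4 ht0
          push_cast at this ⊢
          linarith

lemma finMag_le_evens {N : ℕ} (s : Finset ℕ)
    (hs : s ⊆ (Finset.Iic N).image (fun k => 2*k)) :
    finMag s ≤ 1 + N * Real.tanh 1 := by
  have ht0 : 0 ≤ Real.tanh 1 := tanh_nonneg' (by norm_num)
  have heven : ∀ x ∈ s, 2 ∣ x := by
    intro x hx
    obtain ⟨k, _, rfl⟩ := Finset.mem_image.mp (hs hx)
    exact ⟨k, rfl⟩
  rcases Finset.eq_empty_or_nonempty s with rfl | hne
  · rw [finMag_empty]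
    have : (0:ℝ) ≤ (N:ℕ) * Real.tanh 1 := by positivity
    push_cast at this
    linarith
  · obtain ⟨m, hm⟩ : ∃ m, s.card = m + 1 :=
      ⟨s.card - 1, (Nat.succ_pred_eq_of_pos (Finset.card_pos.mpr hne)).symm⟩
    set f := s.orderEmbOfFin hm with hf
    have h := finMag_eq s f f.strictMono (fun i => Finset.orderEmbOfFin_mem s hm i) hm
    rw [h]
    have hgap : ∀ i : Fin m, Real.tanh (((f i.succ : ℝ) - (f i.castSucc : ℝ))/2)
        ≤ ((f i.succ : ℝ) - (f i.castSucc : ℝ))/2 * Real.tanh 1 := by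
      intro i
      have hlt : (f i.castSucc : ℕ) < f i.succ := f.strictMono (Fin.castSucc_lt_succ (i := i))
      have hd2 : 2 ∣ (f i.succ - f i.castSucc : ℕ) :=
        Nat.dvd_sub (heven _ (Finset.orderEmbOfFin_mem s hm _))
          (heven _ (Finset.orderEmbOfFin_mem s hm _))
      obtain ⟨hh, hhh⟩ := hd2
      have hcast : ((f i.succ : ℝ) - (f i.castSucc : ℝ))
          = ((f i.succ - f i.castSucc : ℕ) : ℝ) := by
        rw [Nat.cast_sub hlt.le]
      rw [hcast, hhh]
      have harg : (((2*hh : ℕ)) : ℝ)/2 = (hh : ℕ) * (1:ℝ) := by push_cast; ring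
      rw [harg]
      calc Real.tanh ((hh:ℕ) * (1:ℝ)) ≤ (hh:ℕ) * Real.tanh 1 := tanh_nat_mul _ (by norm_num)
        _ = ((hh:ℕ):ℝ) * 1 * Real.tanh 1 := by ring
    calc 1 + ∑ i : Fin m, Real.tanh (((f i.succ : ℝ) - (f i.castSucc : ℝ))/2)
        ≤ 1 + ∑ i : Fin m, ((f i.succ : ℝ) - (f i.castSucc : ℝ))/2 * Real.tanh 1 := by
          have := Finset.sum_le_sum (fun i (_ : i ∈ Finset.univ) => hgap i)
          linarith
      _ = 1 + ((f (Fin.last m) : ℝ) - (f 0 : ℝ))/2 * Real.tanh 1 := by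
          have : ∀ i : Fin m, ((f i.succ : ℝ) - (f i.castSucc : ℝ))/2 * Real.tanh 1
              = ((f i.succ : ℝ) - (f i.castSucc : ℝ)) * (Real.tanh 1 / 2) := by
            intro i; ring
          rw [Finset.sum_congr rfl (fun i _ => this i), ← Finset.sum_mul,
            fin_telescope (fun i => (f i : ℝ))]
          ring
      _ ≤ 1 + N * Real.tanh 1 := by
          have h1 : (f (Fin.last m) : ℕ) ≤ 2*N := by
            obtain ⟨k, hk, hkk⟩ := Finset.mem_image.mp (hs (Finset.orderEmbOfFin_mem s hm (Fin.last m)))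
            have h5 := Finset.mem_Iic.mp hk
            have h6 : 2*k = (f (Fin.last m) : ℕ) := hkk
            omega
          have h2 : ((f (Fin.last m)) : ℝ) ≤ ((2*N : ℕ):ℝ) := by exact_mod_cast h1
          have h3 : (0:ℝ) ≤ (f 0 : ℝ) := Nat.cast_nonneg _
          have h4 : ((f (Fin.last m) : ℝ) - (f 0 : ℝ))/2 ≤ (N:ℝ) := by
            push_cast at h2
            linarith
          nlinarith

open scoped ENNReal NNReal

lemma cMag_of_finset (F : Finset ℕ) (c : ℝ) (h0 : 0 ≤ c) (hc : finMag F = c)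
    (hb : ∀ s : Finset ℕ, s ⊆ F → finMag s ≤ c) : cMag (↑F : Set ℕ) = c := by
  have h1 : cMagE (↑F : Set ℕ) = ENNReal.ofReal c := by
    apply le_antisymm
    · refine iSup₂_le fun s hs => ?_
      exact ENNReal.ofReal_le_ofReal (hb s (Finset.coe_subset.mp hs))
    · refine le_iSup₂_of_le F (subset_refl _) ?_
      rw [hc]
  rw [cMag, h1, ENNReal.toReal_ofReal h0]

lemma cMag_Iic (N : ℕ) : cMag {n : ℕ | n ≤ 2*N} = 1 + (2*N) * Real.tanh (1/2) := by
  have hset : {n : ℕ | n ≤ 2*N} = (↑(Finset.Iic (2*N)) : Set ℕ) := by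
    ext n; simp
  rw [hset]
  apply cMag_of_finset
  · have := tanh_nonneg' (by norm_num : (0:ℝ) ≤ 1/2)
    positivity
  · rw [finMag_Iic (2*N)]; push_cast; ring
  · intro s hsub
    have := finMag_le_Iic s hsub
    push_cast at this ⊢
    linarith

lemma cMag_evens (N : ℕ) :
    cMag ((fun k => 2 * k) '' {k : ℕ | k ≤ N}) = 1 + N * Real.tanh 1 := by
  have hset : (fun k => 2 * k) '' {k : ℕ | k ≤ N}
      = (↑((Finset.Iic N).image (fun k => 2*k)) : Set ℕ) := by
    rw [Finset.coe_image, Finset.coe_Iic]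
    rfl
  rw [hset]
  apply cMag_of_finset
  · have := tanh_nonneg' (by norm_num : (0:ℝ) ≤ 1)
    positivity
  · rw [finMag_evens N]
  · intro s hsub
    exact finMag_le_evens s hsub

open Metric TopologicalSpace

lemma tanh_one_lt : Real.tanh 1 < 2 * Real.tanh (1/2) := by
  conv_lhs => rw [show (1:ℝ) = 1/2 + 1/2 from by norm_num]
  rw [Real.tanh_eq_sinh_div_cosh, Real.tanh_eq_sinh_div_cosh, Real.sinh_add, Real.cosh_add]
  set s := Real.sinh (1/2) with hs'
  set c := Real.cosh (1/2) with hc'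
  have hs : 0 < s := by rw [hs']; positivity
  have hc : 0 < c := Real.cosh_pos _
  calc (s*c + c*s)/(c*c + s*s) < 2*s/c := by
        rw [div_lt_div_iff₀ (by positivity) hc]
        nlinarith [mul_pos (mul_pos hs hs) hs]
    _ = 2*(s/c) := by ring

lemma haus_eq (N : ℕ) (hN : 1 ≤ N) :
    hausdorffDist ((fun k => 2 * k) '' {k : ℕ | k ≤ N}) {n : ℕ | n ≤ 2 * N} = 1 := by
  set A : Set ℕ := (fun k => 2 * k) '' {k : ℕ | k ≤ N} with hA
  set B : Set ℕ := {n : ℕ | n ≤ 2 * N} with hB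
  have hAfin : A.Finite := (Set.finite_Iic N).image _
  have hBfin : B.Finite := Set.finite_Iic (2*N)
  have hAne : A.Nonempty := ⟨0, ⟨0, by simp, by simp⟩⟩
  have hBne : B.Nonempty := ⟨0, by simp [hB]⟩
  have hne : EMetric.hausdorffEdist A B ≠ ⊤ :=
    hausdorffEdist_ne_top_of_nonempty_of_bounded hAne hBne hAfin.isBounded hBfin.isBounded
  apply le_antisymm
  · apply hausdorffDist_le_of_mem_dist (by norm_num)
    · intro x hx
      obtain ⟨k, hk, rfl⟩ := hx
      have hk' : k ≤ N := hk
      refine ⟨2*k, by simp only [hB, Set.mem_setOf_eq]; omega, by simp⟩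
    · intro x hx
      have hx' : x ≤ 2*N := hx
      refine ⟨2*(x/2), ⟨x/2, by simp only [Set.mem_setOf_eq]; omega, rfl⟩, ?_⟩
      show |(x:ℝ) - ((2*(x/2) : ℕ) : ℝ)| ≤ 1
      have h1 : 2*(x/2) ≤ x := by omega
      have h2 : x - 2*(x/2) ≤ 1 := by omega
      rw [show ((x:ℝ) - ((2*(x/2) : ℕ) : ℝ)) = ((x - 2*(x/2) : ℕ) : ℝ) from by
        rw [Nat.cast_sub h1], abs_of_nonneg (Nat.cast_nonneg _)]
      exact_mod_cast h2
  · have h1B : (1:ℕ) ∈ B := by simp only [hB, Set.mem_setOf_eq]; omega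
    have hinf : infDist (1:ℕ) A ≤ hausdorffDist B A :=
      infDist_le_hausdorffDist_of_mem h1B (by rw [hausdorffEDist_comm]; exact hne)
    have h2 : (1:ℝ) ≤ infDist (1:ℕ) A := by
      obtain ⟨y, hy, hdy⟩ := (hAfin.isCompact).exists_infDist_eq_dist hAne (1:ℕ)
      rw [hdy]
      obtain ⟨k, _, rfl⟩ := hy
      show (1:ℝ) ≤ |((1:ℕ):ℝ) - ((2*k:ℕ):ℝ)|
      rcases Nat.eq_zero_or_pos k with rfl | hk1
      · norm_num
      · have hge : (2:ℝ) ≤ ((2*k:ℕ):ℝ) := by exact_mod_cast (by omega : 2 ≤ 2*k)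
        rw [abs_sub_comm, abs_of_nonneg (by push_cast at hge ⊢; linarith)]
        push_cast at hge ⊢
        linarith
    rw [hausdorffDist_comm] at hinf
    linarith


theorem stmt_16' :
    (¬ ∃ C : ℝ≥0, LipschitzWith C (fun K : NonemptyCompacts ℕ => cMag (K : Set ℕ))) ∧
    (∀ C : ℝ, 0 < C → ∃ N : ℕ, 1 ≤ N ∧
      hausdorffDist ((fun k => 2 * k) '' {k : ℕ | k ≤ N}) {n : ℕ | n ≤ 2 * N} = 1 ∧
      cMag ({n : ℕ | n ≤ 2 * N} : Set ℕ) - cMag ((fun k => 2 * k) '' {k : ℕ | k ≤ N}) =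
        N * (2 * Real.tanh (1 / 2) - Real.tanh 1) ∧
      C < N * (2 * Real.tanh (1 / 2) - Real.tanh 1)) := by
  have hδ0 : 0 < 2 * Real.tanh (1/2) - Real.tanh 1 := by linarith [tanh_one_lt]
  have main : ∀ C : ℝ, 0 < C → ∃ N : ℕ, 1 ≤ N ∧
      hausdorffDist ((fun k => 2 * k) '' {k : ℕ | k ≤ N}) {n : ℕ | n ≤ 2 * N} = 1 ∧
      cMag ({n : ℕ | n ≤ 2 * N} : Set ℕ) - cMag ((fun k => 2 * k) '' {k : ℕ | k ≤ N}) =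
        N * (2 * Real.tanh (1 / 2) - Real.tanh 1) ∧
      C < N * (2 * Real.tanh (1 / 2) - Real.tanh 1) := by
    intro C hC
    obtain ⟨N₀, hN₀⟩ := exists_nat_gt (C / (2 * Real.tanh (1/2) - Real.tanh 1))
    refine ⟨max N₀ 1, le_max_right _ _, haus_eq _ (le_max_right _ _), ?_, ?_⟩
    · rw [cMag_Iic, cMag_evens]
      push_cast
      ring
    · have h1 : C < N₀ * (2 * Real.tanh (1/2) - Real.tanh 1) := by
        rw [div_lt_iff₀ hδ0] at hN₀
        linarith
      have h2 : (N₀:ℝ) ≤ ((max N₀ 1 : ℕ):ℝ) := by exact_mod_cast le_max_left N₀ 1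
      calc C < N₀ * (2 * Real.tanh (1/2) - Real.tanh 1) := h1
        _ ≤ (max N₀ 1 : ℕ) * (2 * Real.tanh (1/2) - Real.tanh 1) :=
            mul_le_mul_of_nonneg_right h2 hδ0.le
  refine ⟨?_, main⟩
  rintro ⟨C, hC⟩
  obtain ⟨N, hN1, hdist, hdiff, hlt⟩ := main ((C:ℝ) + 1) (by positivity)
  set A : Set ℕ := (fun k => 2 * k) '' {k : ℕ | k ≤ N} with hA
  set B : Set ℕ := {n : ℕ | n ≤ 2 * N} with hB
  have hAfin : A.Finite := (Set.finite_Iic N).image _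
  have hBfin : B.Finite := Set.finite_Iic (2*N)
  have hAne : A.Nonempty := ⟨0, ⟨0, by simp, by simp⟩⟩
  have hBne : B.Nonempty := ⟨0, by simp [hB]⟩
  set KA : NonemptyCompacts ℕ := ⟨⟨A, hAfin.isCompact⟩, hAne⟩ with hKA
  set KB : NonemptyCompacts ℕ := ⟨⟨B, hBfin.isCompact⟩, hBne⟩ with hKB
  have hd := hC.dist_le_mul KA KB
  have hdKAB : dist KA KB = hausdorffDist A B := rfl
  rw [hdKAB, hdist] at hd
  have hcoe : cMag (KA : Set ℕ) = cMag A := rfl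
  have hcoe2 : cMag (KB : Set ℕ) = cMag B := rfl
  simp only [hcoe, hcoe2] at hd
  rw [Real.dist_eq] at hd
  have habs : cMag B - cMag A ≤ |cMag A - cMag B| := by
    rw [abs_sub_comm]
    exact le_abs_self _
  rw [hdiff] at habs
  have : (C:ℝ) * 1 = C := mul_one _
  linarith [hd, hlt, habs]

/-- The magnitude map on nonempty compact subsets of `ℕ` is not Lipschitz:
for every `C > 0` there is `N` such that `A = {2k : k ≤ N}` and `B = {0, …, 2N}` satisfy
`d_H(A, B) = 1` and `mg(B) − mg(A) = N·(2 tanh(1/2) − tanh 1) > C`. -/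
theorem stmt_16 :
    (¬ ∃ C : ℝ≥0, LipschitzWith C (fun K : NonemptyCompacts ℕ => cMag (K : Set ℕ))) ∧
    (∀ C : ℝ, 0 < C → ∃ N : ℕ, 1 ≤ N ∧
      hausdorffDist ((fun k => 2 * k) '' {k : ℕ | k ≤ N}) {n : ℕ | n ≤ 2 * N} = 1 ∧
      cMag ({n : ℕ | n ≤ 2 * N} : Set ℕ) - cMag ((fun k => 2 * k) '' {k : ℕ | k ≤ N}) =
        N * (2 * Real.tanh (1 / 2) - Real.tanh 1) ∧
      C < N * (2 * Real.tanh (1 / 2) - Real.tanh 1)) := by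
  exact stmt_16'
end
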